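/- For any d×d positive semidefinite complex Hermitian matrix J, a d×d positive definite real matrix G, and any real symmetric d×d matrix V with V ≥ J (Loewner order over ℂ), one has Tr(GV) ≥ Tr(G·Re J) + Tr|√G (Im J) √G|. -/

import Mathlib

open Matrix
open scoped ComplexOrder
noncomputable section

/-- Entrywise real part, as a complex matrix. -/
def reM {m n : Type*} (J : Matrix m n ℂ) : Matrix m n ℂ := fun i j => ((J i j).re : ℂ)

/-- Entrywise imaginary part, as a complex matrix. -/
def imM {m n : Type*} (J : Matrix m n ℂ) : Matrix m n ℂ := fun i j => ((J i j).im : ℂ)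

/-- A complex matrix has all real entries. -/
def IsRealMat {m n : Type*} (A : Matrix m n ℂ) : Prop := ∀ i j, (A i j).im = 0

/-- The square root of a positive semidefinite matrix, as defined in Mathlib (Dec 2024). -/
def Matrix.PosSemidef.sqrt {n 𝕜 : Type*} [Fintype n] [DecidableEq n] [RCLike 𝕜]
    {A : Matrix n n 𝕜} (hA : A.PosSemidef) : Matrix n n 𝕜 :=
  hA.1.eigenvectorUnitary.1 * diagonal ((↑) ∘ (√·) ∘ hA.1.eigenvalues) *
    (star hA.1.eigenvectorUnitary : Matrix n n 𝕜)

/-- Matrix absolute value `|A| = √(Aᴴ A)`. -/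
def matAbs {n : Type*} [Fintype n] [DecidableEq n] (A : Matrix n n ℂ) : Matrix n n ℂ :=
  (Matrix.posSemidef_conjTranspose_mul_self A).sqrt

open scoped MatrixOrder in
lemma Matrix.PosSemidef.sqrt_eq_cfc {n 𝕜 : Type*} [Fintype n] [DecidableEq n] [RCLike 𝕜]
    {A : Matrix n n 𝕜} (hA : A.PosSemidef) : hA.sqrt = CFC.sqrt A := by
  rw [CFC.sqrt_eq_cfc, cfc_nnreal_eq_real _ A hA.nonneg, hA.1.cfc_eq, IsHermitian.cfc,
    Unitary.conjStarAlgAut_apply, Matrix.PosSemidef.sqrt]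
  congr 4
  funext x
  unfold Real.sqrt
  rfl

open scoped MatrixOrder in
lemma Matrix.PosSemidef.posSemidef_sqrt {n 𝕜 : Type*} [Fintype n] [DecidableEq n] [RCLike 𝕜]
    {A : Matrix n n 𝕜} (hA : A.PosSemidef) : hA.sqrt.PosSemidef := by
  rw [hA.sqrt_eq_cfc]
  exact Matrix.nonneg_iff_posSemidef.mp (CFC.sqrt_nonneg A)

open scoped MatrixOrder in
lemma Matrix.PosSemidef.sqrt_mul_self {n 𝕜 : Type*} [Fintype n] [DecidableEq n] [RCLike 𝕜]
    {A : Matrix n n 𝕜} (hA : A.PosSemidef) : hA.sqrt * hA.sqrt = A := by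
  rw [hA.sqrt_eq_cfc]
  exact CFC.sqrt_mul_sqrt_self A hA.nonneg

open scoped MatrixOrder in
lemma Matrix.PosSemidef.eq_sqrt_of_sq_eq {n 𝕜 : Type*} [Fintype n] [DecidableEq n] [RCLike 𝕜]
    {A B : Matrix n n 𝕜} (hA : A.PosSemidef) (hB : B.PosSemidef) (h : A ^ 2 = B) :
    A = hB.sqrt := by
  rw [hB.sqrt_eq_cfc, eq_comm, CFC.sqrt_eq_iff _ _ hB.nonneg hA.nonneg, ← sq, h]

lemma sandwich {n : Type*} [Fintype n] [DecidableEq n] (U X Y : Matrix n n ℂ)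
    (h : star U * U = 1) :
    (U * X * star U) * (U * Y * star U) = U * (X * Y) * star U := by
  simp only [mul_assoc]
  rw [← mul_assoc (star U) U, h, one_mul]

lemma key {n : Type*} [Fintype n] [DecidableEq n] (A H B : Matrix n n ℂ)
    (hH : H.IsHermitian) (hp : (A - H).PosSemidef) (hm : (A + H).PosSemidef)
    (hB : Bᴴ * B = H * H) :
    (Matrix.trace (matAbs B)).re ≤ (Matrix.trace A).re := by
  set U : Matrix n n ℂ := (hH.eigenvectorUnitary : Matrix n n ℂ) with hU
  set lam : n → ℝ := hH.eigenvalues with hlam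
  have hUU : star U * U = 1 := Unitary.coe_star_mul_self hH.eigenvectorUnitary
  have hUU' : U * star U = 1 := Unitary.coe_mul_star_self hH.eigenvectorUnitary
  set D : Matrix n n ℂ := diagonal (fun i => ((|lam i| : ℝ) : ℂ)) with hD
  set K : Matrix n n ℂ := U * D * star U with hK
  have hDpsd : D.PosSemidef := by
    refine posSemidef_diagonal_iff.mpr fun i => ?_
    exact Complex.zero_le_real.mpr (abs_nonneg _)
  have hKpsd : K.PosSemidef := by
    rw [hK, Matrix.star_eq_conjTranspose]
    exact hDpsd.mul_mul_conjTranspose_same U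
  have hspec := hH.spectral_theorem
  rw [Unitary.conjStarAlgAut_apply] at hspec
  have hKsq : K ^ 2 = Bᴴ * B := by
    rw [hB, pow_two, hK, sandwich _ _ _ hUU, hspec]
    rw [sandwich _ _ _ hUU, hD, diagonal_mul_diagonal, diagonal_mul_diagonal]
    congr 2
    funext i
    simp only [Function.comp_apply]
    norm_cast
    funext j
    simp [Matrix.diagonal_apply, abs_mul_abs_self, hlam]
  have habs : matAbs B = K :=
    ((hKpsd.eq_sqrt_of_sq_eq (posSemidef_conjTranspose_mul_self B) hKsq)).symm
  have htrK : Matrix.trace K = ∑ i, ((|lam i| : ℝ) : ℂ) := by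
    rw [hK, trace_mul_cycle, hUU, one_mul, hD, trace_diagonal]
  have hdiag : ∀ i, |lam i| ≤ ((star U * A * U) i i).re := by
    intro i
    have hform : (star U * A * U) i i
        = star (⇑(hH.eigenvectorBasis i)) ⬝ᵥ (A *ᵥ ⇑(hH.eigenvectorBasis i)) := by
      simp only [mul_apply, mulVec, dotProduct, star_apply, Matrix.star_eq_conjTranspose,
        conjTranspose_apply, Pi.star_apply, hU, IsHermitian.eigenvectorUnitary_apply]
      simp only [Finset.sum_mul, Finset.mul_sum]
      rw [Finset.sum_comm]
      exact Finset.sum_congr rfl fun k _ => Finset.sum_congr rfl fun l _ => by ring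
    have hHv : star (⇑(hH.eigenvectorBasis i)) ⬝ᵥ (H *ᵥ ⇑(hH.eigenvectorBasis i))
        = ((lam i : ℝ) : ℂ) := by
      rw [hH.mulVec_eigenvectorBasis, dotProduct_smul]
      have hnorm : star (⇑(hH.eigenvectorBasis i)) ⬝ᵥ (⇑(hH.eigenvectorBasis i)) = 1 := by
        have h1 := hH.eigenvectorBasis.orthonormal.1 i
        have h2 := EuclideanSpace.inner_eq_star_dotProduct (hH.eigenvectorBasis i)
          (hH.eigenvectorBasis i)
        rw [@inner_self_eq_norm_sq_to_K ℂ, h1] at h2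
        simpa [dotProduct, Matrix.star_apply, mul_comm] using h2.symm
      rw [hnorm]
      simp [Complex.real_smul, hlam]
    have h1 : lam i ≤ (star (⇑(hH.eigenvectorBasis i)) ⬝ᵥ (A *ᵥ ⇑(hH.eigenvectorBasis i))).re := by
      have := hp.dotProduct_mulVec_nonneg (⇑(hH.eigenvectorBasis i))
      rw [sub_mulVec, dotProduct_sub, hHv, Complex.le_def] at this
      simp only [Complex.sub_re, Complex.ofReal_re, Complex.zero_re] at this
      linarith [this.1]
    have h2 : -lam i ≤ (star (⇑(hH.eigenvectorBasis i)) ⬝ᵥ (A *ᵥ ⇑(hH.eigenvectorBasis i))).re := by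
      have := hm.dotProduct_mulVec_nonneg (⇑(hH.eigenvectorBasis i))
      rw [add_mulVec, dotProduct_add, hHv, Complex.le_def] at this
      simp only [Complex.add_re, Complex.ofReal_re, Complex.zero_re] at this
      linarith [this.1]
    rw [hform]
    rcases abs_cases (lam i) with ⟨h, _⟩ | ⟨h, _⟩ <;> rw [h]
    · exact h1
    · exact h2
  have htrA : Matrix.trace A = Matrix.trace (star U * A * U) := by
    rw [trace_mul_cycle, hUU', one_mul]
  rw [habs, htrK, htrA, Matrix.trace]
  simp only [Matrix.diag]
  rw [Complex.re_sum, Complex.re_sum]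
  apply Finset.sum_le_sum
  intro i _
  simpa using hdiag i

/-- For a positive semidefinite complex Hermitian `J`, positive definite real `G`, and any real
symmetric `V` with `V ≥ J` (Loewner order over ℂ):
`Tr(G V) ≥ Tr(G Re J) + Tr|√G (Im J) √G|`. -/
theorem trace_lower_bound {d : ℕ} (J G V : Matrix (Fin d) (Fin d) ℂ)
    (hJ : J.PosSemidef) (hG : G.PosDef) (hGreal : IsRealMat G)
    (hVreal : IsRealMat V) (hVherm : V.IsHermitian) (hVJ : (V - J).PosSemidef) :
    (Matrix.trace (G * V)).re ≥
      (Matrix.trace (G * reM J)).re +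
        (Matrix.trace (matAbs (hG.posSemidef.sqrt * imM J * hG.posSemidef.sqrt))).re := by
  set c := starRingEnd ℂ with hc
  set S : Matrix (Fin d) (Fin d) ℂ := hG.posSemidef.sqrt with hS
  have hSps : S.PosSemidef := hG.posSemidef.posSemidef_sqrt
  have hSherm : Sᴴ = S := hSps.1
  have hSS : S * S = G := hG.posSemidef.sqrt_mul_self
  -- realness facts
  have hVc : V.map c = V := by
    ext i j; exact Complex.conj_eq_iff_im.mpr (hVreal i j)
  have hGc : G.map c = G := by
    ext i j; exact Complex.conj_eq_iff_im.mpr (hGreal i j)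
  have hRc : (reM J).map c = reM J := by
    ext i j; exact Complex.conj_eq_iff_im.mpr (by simp [reM])
  have hIc : (imM J).map c = imM J := by
    ext i j; exact Complex.conj_eq_iff_im.mpr (by simp [imM])
  -- √G is real
  have hSc : S.map c = S := by
    have h1 : S.map c = Sᵀ := by
      ext i j
      have := congrFun (congrFun hSherm j) i
      simp only [conjTranspose_apply] at this
      simp only [Matrix.map_apply, transpose_apply, hc]
      rw [← this]
      simp
    have h2 : (S.map c).PosSemidef := by rw [h1]; exact hSps.transpose
    have h3 : (S.map c) ^ 2 = G := by
      rw [pow_two, ← Matrix.map_mul, hSS, hGc]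
    have := h2.eq_sqrt_of_sq_eq hG.posSemidef h3
    rw [this, hS]
  -- decomposition of J
  have hJsplit : J = reM J + Complex.I • imM J := by
    ext i j
    simp only [Matrix.add_apply, Matrix.smul_apply, reM, imM, smul_eq_mul]
    rw [mul_comm, Complex.re_add_im]
  -- imaginary part is antisymmetric (conjTranspose = -)
  have hJim : (imM J)ᴴ = -(imM J) := by
    ext i j
    have := congrFun (congrFun hJ.1 j) i
    simp only [conjTranspose_apply] at this
    have him : (J i j).im = -(J j i).im := by
      rw [← this]; simp
    simp [conjTranspose_apply, imM, him, Complex.ext_iff]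
  have hJre : (reM J)ᴴ = reM J := by
    ext i j
    have := congrFun (congrFun hJ.1 j) i
    simp only [conjTranspose_apply] at this
    have hre : (J i j).re = (J j i).re := by rw [← this]; simp
    simp [conjTranspose_apply, reM, hre, Complex.ext_iff]
  set A : Matrix (Fin d) (Fin d) ℂ := S * (V - reM J) * S with hA
  set Bm : Matrix (Fin d) (Fin d) ℂ := S * imM J * S with hBm
  set Hm : Matrix (Fin d) (Fin d) ℂ := Complex.I • Bm with hHm
  have hBmherm : Bmᴴ = -Bm := by
    rw [hBm, conjTranspose_mul, conjTranspose_mul, hSherm, hJim]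
    rw [Matrix.neg_mul, Matrix.mul_neg, mul_assoc]
  have hHherm : Hm.IsHermitian := by
    unfold Matrix.IsHermitian
    rw [hHm, conjTranspose_smul, hBmherm]
    simp
  have hBB : Bmᴴ * Bm = Hm * Hm := by
    rw [hBmherm, hHm, Matrix.smul_mul, Matrix.mul_smul, smul_smul, Complex.I_mul_I]
    simp
  have hsplit2 : S * (V - J) * S = A - Hm := by
    have h0 : V - J = V - (reM J + Complex.I • imM J) := by rw [← hJsplit]
    rw [hA, hHm, hBm, h0, sub_add_eq_sub_sub, Matrix.mul_sub, Matrix.sub_mul,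
      Matrix.mul_smul, Matrix.smul_mul]
  have hpsd1 : (A - Hm).PosSemidef := by
    have h1 := hVJ.conjTranspose_mul_mul_same S
    rw [hSherm, hsplit2] at h1
    exact h1
  -- conjugates
  have hAc : A.map c = A := by
    rw [hA, Matrix.map_mul, Matrix.map_mul, Matrix.map_sub _ (fun a b => map_sub c a b),
      hSc, hVc, hRc]
  have hBmc : Bm.map c = Bm := by
    rw [hBm, Matrix.map_mul, Matrix.map_mul, hSc, hIc]
  have hHmc : Hm.map c = -Hm := by
    ext i j
    have hb := congrFun (congrFun hBmc i) j
    simp only [Matrix.map_apply, hc] at hb ⊢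
    simp only [hHm, Matrix.smul_apply, Matrix.neg_apply, smul_eq_mul, _root_.map_mul,
      Complex.conj_I, hb]
    ring
  have hpsd2 : (A + Hm).PosSemidef := by
    have ht := hpsd1.transpose
    have heq : (A - Hm)ᵀ = A + Hm := by
      have h1 : (A - Hm)ᵀ = ((A - Hm)ᴴ).map c := by
        ext i j
        simp [conjTranspose_apply, Matrix.map_apply]
      rw [h1, hpsd1.1, Matrix.map_sub _ (fun a b => map_sub c a b), hAc, hHmc, sub_neg_eq_add]
    rwa [heq] at ht
  have hkey := key A Hm Bm hHherm hpsd1 hpsd2 hBB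
  have htr : Matrix.trace A = Matrix.trace (G * V) - Matrix.trace (G * reM J) := by
    rw [hA, trace_mul_cycle, hSS, Matrix.mul_sub, Matrix.trace_sub]
  rw [htr] at hkey
  simp only [Complex.sub_re] at hkey
  linarith
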